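/- For any groups G and H, any group homomorphisms φ₁, …, φ_k : G → H (k ≥ 2), and any permutation σ of the index set {1, …, k}, the Reidemeister numbers satisfy R(φ₁, …, φ_k) = R(φ_{σ(1)}, …, φ_{σ(k)}). -/
import Mathlib


/-- The relation on `(k-1)`-tuples (here `k = m+1`) defining the Reidemeister classes of a
family of homomorphisms `φ₁, …, φ_k : G → H`:  `(α₂,…,α_k) ∼ (β₂,…,β_k)` iff there is `z : G`
with `β_i = φ₁(z) * α_i * φ_i(z)⁻¹` for all `i = 2,…,k`.  The family is indexed by `Fin (m+1)`,
with `φ 0` playing the distinguished role of `φ₁` and the tuples indexed by `Fin m`. -/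
def mRel {G H : Type*} [Group G] [Group H] {m : ℕ} (φ : Fin (m + 1) → (G →* H))
    (α β : Fin m → H) : Prop :=
  ∃ z : G, ∀ i : Fin m, β i = φ 0 z * α i * (φ i.succ z)⁻¹

/-- The Reidemeister set `𝓡(φ₁,…,φ_k)` of a family of homomorphisms: the quotient of
`H^{k-1}` by the relation `mRel`. -/
def ReidSetM {G H : Type*} [Group G] [Group H] {m : ℕ} (φ : Fin (m + 1) → (G →* H)) :
    Type _ :=
  Quot (mRel φ)

/-- The "full tuple" relation: orbits of the `G × H` action on `H^{m+1}` given by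
`(z, h) · A = fun i => h * A i * (φ i z)⁻¹`. -/
def fullRel {G H : Type*} [Group G] [Group H] {m : ℕ} (φ : Fin (m + 1) → (G →* H))
    (A B : Fin (m + 1) → H) : Prop :=
  ∃ z : G, ∃ h : H, ∀ i, B i = h * A i * (φ i z)⁻¹

/-- `ReidSetM φ` is equivalent to the full-tuple quotient. -/
def equivFull {G H : Type*} [Group G] [Group H] {m : ℕ} (φ : Fin (m + 1) → (G →* H)) :
    ReidSetM φ ≃ Quot (fullRel φ) where
  toFun := Quot.map (fun α => Fin.cons 1 α) (by
    rintro α β ⟨z, hz⟩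
    refine ⟨z, φ 0 z, fun i => ?_⟩
    refine Fin.cases ?_ (fun j => ?_) i
    · simp
    · simpa using hz j)
  invFun := Quot.map (fun A i => (A 0)⁻¹ * A i.succ) (by
    rintro A B ⟨z, h, hz⟩
    refine ⟨z, fun i => ?_⟩
    show (B 0)⁻¹ * B i.succ = φ 0 z * ((A 0)⁻¹ * A i.succ) * (φ i.succ z)⁻¹
    rw [hz i.succ, hz 0]
    group)
  left_inv := by
    refine Quot.ind fun α => ?_
    show Quot.mk _ _ = Quot.mk _ α
    congr 1
    funext i
    simp
  right_inv := by
    refine Quot.ind fun A => ?_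
    refine Quot.sound ⟨1, A 0, fun i => ?_⟩
    refine Fin.cases ?_ (fun j => ?_) i <;> simp
  
/-- The full-tuple quotient is permutation-invariant. -/
def permEquivFull {G H : Type*} [Group G] [Group H] {m : ℕ} (φ : Fin (m + 1) → (G →* H))
    (σ : Equiv.Perm (Fin (m + 1))) :
    Quot (fullRel φ) ≃ Quot (fullRel (φ ∘ σ)) where
  toFun := Quot.map (fun A => A ∘ σ) (by
    rintro A B ⟨z, h, hz⟩
    exact ⟨z, h, fun i => hz (σ i)⟩)
  invFun := Quot.map (fun A => A ∘ σ.symm) (by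
    rintro A B ⟨z, h, hz⟩
    refine ⟨z, h, fun i => ?_⟩
    have := hz (σ.symm i)
    simpa using this)
  left_inv := by
    refine Quot.ind fun A => ?_
    show Quot.mk _ _ = Quot.mk _ A
    congr 1
    funext i
    simp [Function.comp]
  right_inv := by
    refine Quot.ind fun A => ?_
    show Quot.mk _ _ = Quot.mk _ A
    congr 1
    funext i
    simp [Function.comp]

/-- For any groups `G` and `H`, any homomorphisms `φ₁, …, φ_k : G → H` (`k = m + 1 ≥ 2`) and
any permutation `σ` of the index set, the Reidemeister numbers (as elements of `ℕ∞`, i.e.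
natural numbers or `∞`) satisfy `R(φ₁,…,φ_k) = R(φ_{σ(1)},…,φ_{σ(k)})`. -/
theorem reidemeister_number_perm_invariant {G H : Type*} [Group G] [Group H] {m : ℕ}
    (hm : 1 ≤ m) (φ : Fin (m + 1) → (G →* H)) (σ : Equiv.Perm (Fin (m + 1))) :
    ENat.card (ReidSetM φ) = ENat.card (ReidSetM (φ ∘ σ)) := by
  exact ENat.card_congr ((equivFull φ).trans
    ((permEquivFull φ σ).trans (equivFull (φ ∘ σ)).symm))
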